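/- Let w ∈ ℕⁿ with |w| even, and let K(λ, μ) be the number of semistandard Young tableaux of shape λ = (|w|/2, |w|/2) and content μ = w. Then K(λ, μ) = π(n, w, |w|/2) − π(n, w, |w|/2 − 1), where π(n, w, k) is the number of ν ∈ ℕⁿ with ∑νᵢ = k and νᵢ ≤ wᵢ for all i. -/

import Mathlib

/-- Semistandardness for a two-row tableau encoded as a pair of rows. -/
def IsSSYT {n k : ℕ} (τ : (Fin k → Fin n) × (Fin k → Fin n)) : Prop :=
  (∀ s t, s ≤ t → τ.1 s ≤ τ.1 t) ∧ (∀ s t, s ≤ t → τ.2 s ≤ τ.2 t) ∧ (∀ t, τ.1 t < τ.2 t)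

/-- The content of a two-row tableau. -/
def content {n k : ℕ} (τ : (Fin k → Fin n) × (Fin k → Fin n)) (i : Fin n) : ℕ :=
  (Finset.univ.filter (fun t => τ.1 t = i)).card +
    (Finset.univ.filter (fun t => τ.2 t = i)).card

/-- π(n,w,k) = #{ν ∈ ℕⁿ : ∑ νᵢ = k, νᵢ ≤ wᵢ for all i}, with k an integer
(so that π = 0 when k < 0). -/
def piCount (n : ℕ) (w : Fin n → ℕ) (k : ℤ) : ℤ :=
  if k < 0 then 0 else
    (((Finset.Nat.antidiagonalTuple n k.toNat).filter (fun ν => ∀ i, ν i ≤ w i)).card : ℤ)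

namespace Stmt5Aux

def part {n : ℕ} (v : Fin n → ℕ) (j : ℕ) : ℕ :=
  ∑ i : Fin n, if (i : ℕ) < j then v i else 0

lemma part_zero {n : ℕ} (v : Fin n → ℕ) : part v 0 = 0 := by simp [part]

lemma part_of_le {n : ℕ} (v : Fin n → ℕ) {j : ℕ} (h : n ≤ j) : part v j = ∑ i, v i := by
  unfold part
  exact Finset.sum_congr rfl fun i _ => if_pos (lt_of_lt_of_le i.isLt h)

lemma part_mono {n : ℕ} (v : Fin n → ℕ) : Monotone (part v) := by
  intro a b hab
  exact Finset.sum_le_sum fun i _ => by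
    split
    · rw [if_pos (lt_of_lt_of_le (by assumption) hab)]
    · exact Nat.zero_le _

lemma part_le_sum {n : ℕ} (v : Fin n → ℕ) (j : ℕ) : part v j ≤ ∑ i, v i :=
  Finset.sum_le_sum fun i _ => by split <;> simp

lemma part_add {n : ℕ} (v w : Fin n → ℕ) (j : ℕ) :
    part (fun i => v i + w i) j = part v j + part w j := by
  unfold part
  rw [← Finset.sum_add_distrib]
  exact Finset.sum_congr rfl fun i _ => by split <;> simp


lemma part_init {n : ℕ} (v : Fin (n + 1) → ℕ) {j : ℕ} (hj : j ≤ n) :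
    part v j = part (Fin.init v) j := by
  unfold part
  rw [Fin.sum_univ_castSucc]
  have : ¬ ((Fin.last n : ℕ) < j) := by simp [Fin.last]; omega
  rw [if_neg this, add_zero]
  exact Finset.sum_congr rfl fun i _ => by simp [Fin.init]

lemma part_succ_fin {n : ℕ} (v : Fin n → ℕ) (i : Fin n) :
    part v ((i : ℕ) + 1) = part v (i : ℕ) + v i := by
  unfold part
  have hvi : v i = ∑ i' : Fin n, if i' = i then v i' else 0 := by
    rw [Finset.sum_ite_eq' Finset.univ i v]
    simp
  rw [hvi, ← Finset.sum_add_distrib]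
  apply Finset.sum_congr rfl
  intro i' _
  rcases eq_or_ne i' i with he | hne
  · subst he
    simp
  · have hv : (i' : ℕ) ≠ (i : ℕ) := fun hh => hne (Fin.ext hh)
    have : ¬ (i' = i) := hne
    split_ifs <;> omega

/-- number of occurrences of the letter i in the row r -/
def cnt {n k : ℕ} (r : Fin k → Fin n) (i : Fin n) : ℕ :=
  (Finset.univ.filter (fun t => r t = i)).card

lemma sum_cnt {n k : ℕ} (r : Fin k → Fin n) : ∑ i, cnt r i = k := by
  unfold cnt
  rw [← Finset.card_eq_sum_card_fiberwise (fun t _ => Finset.mem_univ (r t))]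
  simp

lemma card_val_Ico {k a b : ℕ} (hb : b ≤ k) :
    (Finset.univ.filter fun t : Fin k => a ≤ (t : ℕ) ∧ (t : ℕ) < b).card = b - a := by
  rcases Nat.eq_zero_or_pos k with hk | hk
  · subst hk
    have hb0 : b = 0 := by omega
    subst hb0
    simp
  rw [← Nat.card_Ico a b]
  refine Finset.card_nbij' (fun t => (t : ℕ)) (fun m => (⟨m % k, Nat.mod_lt m hk⟩ : Fin k)) ?_ ?_ ?_ ?_
  · intro t ht
    simp only [Finset.mem_coe, Finset.mem_filter, Finset.mem_univ, true_and] at ht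
    exact Finset.mem_Ico.mpr ht
  · intro m hm
    rw [Finset.mem_coe, Finset.mem_Ico] at hm
    simp only [Finset.mem_coe, Finset.mem_filter, Finset.mem_univ, true_and]
    have : m % k = m := Nat.mod_eq_of_lt (by omega)
    rw [this]
    exact hm
  · intro t ht
    exact Fin.ext (Nat.mod_eq_of_lt t.isLt)
  · intro m hm
    rw [Finset.mem_coe, Finset.mem_Ico] at hm
    simp [Nat.mod_eq_of_lt (show m < k by omega)]

lemma card_val_Iio {k b : ℕ} (hb : b ≤ k) :
    (Finset.univ.filter fun t : Fin k => (t : ℕ) < b).card = b := by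
  have := card_val_Ico (a := 0) hb
  simpa using this

lemma lcum_eq {n k : ℕ} (r : Fin k → Fin n) (j : ℕ) :
    (Finset.univ.filter fun t => (r t : ℕ) < j).card = part (cnt r) j := by
  rw [Finset.card_eq_sum_card_fiberwise
    (f := r) (t := Finset.univ.filter fun i : Fin n => (i : ℕ) < j)
    (fun t ht => by
      simp only [Finset.mem_coe, Finset.mem_filter, Finset.mem_univ, true_and] at *
      exact ht)]
  rw [part, ← Finset.sum_filter]
  apply Finset.sum_congr rfl
  intro i hi
  simp only [Finset.mem_filter, Finset.mem_univ, true_and] at hi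
  unfold cnt
  congr 1
  rw [Finset.filter_filter]
  apply Finset.filter_congr
  intro t _
  constructor
  · exact fun h => h.2
  · intro h
    exact ⟨by rw [h]; exact hi, h⟩

lemma mono_lt_iff {n k : ℕ} {r : Fin k → Fin n} (hr : Monotone r) (t : Fin k) (j : ℕ) :
    (r t : ℕ) < j ↔ (t : ℕ) < part (cnt r) j := by
  rw [← lcum_eq]
  constructor
  · intro h
    have hsub : (Finset.univ.filter fun t' : Fin k => (t' : ℕ) < (t : ℕ) + 1)
        ⊆ (Finset.univ.filter fun t' => (r t' : ℕ) < j) := by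
      intro t' ht'
      simp only [Finset.mem_filter, Finset.mem_univ, true_and] at *
      have : t' ≤ t := by omega
      exact lt_of_le_of_lt (show (r t' : ℕ) ≤ (r t : ℕ) from hr this) h
    have := Finset.card_le_card hsub
    rw [card_val_Iio t.isLt] at this
    omega
  · intro h
    by_contra hc
    push_neg at hc
    have hsub : (Finset.univ.filter fun t' : Fin k => (r t' : ℕ) < j)
        ⊆ (Finset.univ.filter fun t' : Fin k => (t' : ℕ) < (t : ℕ)) := by
      intro t' ht'
      simp only [Finset.mem_filter, Finset.mem_univ, true_and] at *
      by_contra hc2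
      push_neg at hc2
      have : r t ≤ r t' := hr (by omega)
      omega
    have := Finset.card_le_card hsub
    rw [card_val_Iio (le_of_lt t.isLt)] at this
    omega

lemma mono_cnt_inj {n k : ℕ} {r r' : Fin k → Fin n} (hr : Monotone r) (hr' : Monotone r')
    (h : cnt r = cnt r') : r = r' := by
  funext t
  have key : ∀ j : ℕ, ((r t : ℕ) < j ↔ (r' t : ℕ) < j) := by
    intro j
    rw [mono_lt_iff hr t j, mono_lt_iff hr' t j, h]
  have k1 := (key ((r t : ℕ) + 1)).mp (by omega)
  have k2 := (key ((r' t : ℕ) + 1)).mpr (by omega)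
  exact Fin.ext (by omega)

lemma exists_mono {n k : ℕ} (ν : Fin n → ℕ) (hs : ∑ i, ν i = k) :
    ∃ r : Fin k → Fin n, Monotone r ∧ cnt r = ν := by
  rcases Nat.eq_zero_or_pos n with hn | hn
  · subst hn
    have hk : k = 0 := by simp at hs; omega
    subst hk
    exact ⟨Fin.elim0, fun a => a.elim0, funext fun i => i.elim0⟩
  have hne : ∀ t : Fin k, ((Finset.univ.filter
      fun i : Fin n => (t : ℕ) < part ν ((i : ℕ) + 1))).Nonempty := by
    intro t
    refine ⟨⟨n - 1, by omega⟩, ?_⟩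
    simp only [Finset.mem_filter, Finset.mem_univ, true_and]
    show (t : ℕ) < part ν ((n - 1) + 1)
    have he : (n - 1) + 1 = n := by omega
    rw [he, part_of_le _ le_rfl, hs]
    exact t.isLt
  set r : Fin k → Fin n := fun t => ((Finset.univ.filter
      fun i : Fin n => (t : ℕ) < part ν ((i : ℕ) + 1))).min' (hne t) with hrdef
  have hmem : ∀ t : Fin k, (t : ℕ) < part ν ((r t : ℕ) + 1) := by
    intro t
    have := Finset.min'_mem _ (hne t)
    rw [Finset.mem_filter] at this
    exact this.2
  have hlow : ∀ t : Fin k, part ν ((r t : ℕ)) ≤ (t : ℕ) := by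
    intro t
    rcases Nat.eq_zero_or_pos ((r t : ℕ)) with h0 | h0
    · rw [h0, part_zero]; omega
    by_contra hc
    push_neg at hc
    obtain ⟨m, hm⟩ : ∃ m : ℕ, (r t : ℕ) = m + 1 := ⟨(r t : ℕ) - 1, by omega⟩
    have hmn : m < n := by have := (r t).isLt; omega
    have hprev : (⟨m, hmn⟩ : Fin n) ∈ (Finset.univ.filter
        fun i : Fin n => (t : ℕ) < part ν ((i : ℕ) + 1)) := by
      simp only [Finset.mem_filter, Finset.mem_univ, true_and]
      show (t : ℕ) < part ν (m + 1)
      rw [← hm]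
      exact hc
    have h4 : r t ≤ (⟨m, hmn⟩ : Fin n) := Finset.min'_le _ _ hprev
    have h5 : (r t : ℕ) ≤ m := h4
    omega
  have hmono : Monotone r := by
    intro s t hst
    by_contra hc
    push_neg at hc
    have h1 := hmem s
    have h2 := hlow s
    have hrts : (r t : ℕ) + 1 ≤ (r s : ℕ) := hc
    have h3 := hmem t
    have := part_mono ν (show (r t : ℕ) + 1 ≤ (r s : ℕ) from hrts)
    have hst' : (s : ℕ) ≤ (t : ℕ) := hst
    omega
  refine ⟨r, hmono, ?_⟩
  funext i
  have hfib : ∀ t : Fin k, r t = i ↔ (part ν (i : ℕ) ≤ (t : ℕ) ∧ (t : ℕ) < part ν ((i : ℕ) + 1)) := by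
    intro t
    constructor
    · intro h
      rw [← h]
      exact ⟨hlow t, hmem t⟩
    · rintro ⟨hl, hu⟩
      have himem : i ∈ (Finset.univ.filter fun i' : Fin n => (t : ℕ) < part ν ((i' : ℕ) + 1)) := by
        simp only [Finset.mem_filter, Finset.mem_univ, true_and]
        exact hu
      have hle : r t ≤ i := Finset.min'_le _ _ himem
      rcases eq_or_lt_of_le hle with he | hlt
      · exact he
      · exfalso
        have : (r t : ℕ) + 1 ≤ (i : ℕ) := hlt
        have := part_mono ν this
        have := hmem t
        omega
  unfold cnt
  have : (Finset.univ.filter fun t : Fin k => r t = i)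
      = (Finset.univ.filter fun t : Fin k => part ν (i : ℕ) ≤ (t : ℕ) ∧ (t : ℕ) < part ν ((i : ℕ) + 1)) := by
    apply Finset.filter_congr
    intro t _
    exact hfib t
  rw [this, card_val_Ico (by rw [← hs]; exact part_le_sum ν _)]
  have := part_succ_fin ν i
  omega

lemma col_iff {n k : ℕ} {r1 r2 : Fin k → Fin n} (h1 : Monotone r1) (h2 : Monotone r2) :
    (∀ t, r1 t < r2 t) ↔ ∀ j : ℕ, part (cnt r2) (j + 1) ≤ part (cnt r1) j := by
  constructor
  · intro hcol j
    rw [← lcum_eq, ← lcum_eq]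
    apply Finset.card_le_card
    intro t ht
    simp only [Finset.mem_filter, Finset.mem_univ, true_and] at *
    have := hcol t
    rw [Fin.lt_def] at this
    omega
  · intro hpart t
    have ht2 : (r2 t : ℕ) < (r2 t : ℕ) + 1 := by omega
    have := (mono_lt_iff h2 t ((r2 t : ℕ) + 1)).mp ht2
    have hlt := lt_of_lt_of_le this (hpart (r2 t : ℕ))
    have := (mono_lt_iff h1 t (r2 t : ℕ)).mpr hlt
    rw [Fin.lt_def]
    exact this


/-- The lattice-word / ballot condition for the pair of rows with contents ν and w - ν. -/
def Ballot {n : ℕ} (w ν : Fin n → ℕ) : Prop :=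
  ∀ j < n, part w (j + 1) ≤ part ν (j + 1) + part ν j

instance {n : ℕ} (w ν : Fin n → ℕ) : Decidable (Ballot w ν) := by
  unfold Ballot; infer_instance

def balSet (n : ℕ) (w : Fin n → ℕ) (k : ℕ) : Finset (Fin n → ℕ) :=
  (Finset.Nat.antidiagonalTuple n k).filter (fun ν => (∀ i, ν i ≤ w i) ∧ Ballot w ν)

lemma bal_zero (w : Fin 0 → ℕ) (k : ℕ) :
    (balSet 0 w k).card = if k = 0 then 1 else 0 := by
  unfold balSet
  rcases Nat.eq_zero_or_pos k with hk | hk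
  · subst hk
    rw [if_pos rfl]
    rw [show (Finset.Nat.antidiagonalTuple 0 0) = {![]} from rfl]
    rw [Finset.filter_true_of_mem]
    · simp
    · intro ν _
      exact ⟨fun i => i.elim0, fun j hj => by omega⟩
  · rw [if_neg (by omega)]
    rw [Finset.card_eq_zero, Finset.filter_eq_empty_iff]
    intro ν hν
    rw [Finset.Nat.mem_antidiagonalTuple] at hν
    simp at hν
    omega

lemma bal_rec {n : ℕ} (w : Fin (n + 1) → ℕ) (k : ℕ) :
    (balSet (n + 1) w k).card = ∑ t ∈ Finset.range (k + 1),
      if t ≤ w (Fin.last n) ∧ ∑ i, w i + t ≤ 2 * k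
        then (balSet n (Fin.init w) (k - t)).card else 0 := by
  unfold balSet
  rw [Finset.card_eq_sum_card_fiberwise (f := fun ν => ν (Fin.last n))
    (t := Finset.range (k + 1)) ?hmem]
  case hmem =>
    intro ν hν
    simp only [Finset.mem_coe, Finset.mem_filter, Finset.Nat.mem_antidiagonalTuple] at hν
    refine Finset.mem_range.mpr (Nat.lt_succ_of_le ?_)
    rw [← hν.1]
    exact Finset.single_le_sum (fun i _ => Nat.zero_le _) (Finset.mem_univ _)
  apply Finset.sum_congr rfl
  intro t ht
  rw [Finset.mem_range, Nat.lt_succ_iff] at ht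
  -- key facts about ν in the fiber
  have hfact : ∀ ν : Fin (n + 1) → ℕ, ∑ i, ν i = k → ν (Fin.last n) = t →
      (part ν (n + 1) = k ∧ part ν n = k - t) := by
    intro ν hsum hlast
    constructor
    · rw [part_of_le _ (le_refl _), hsum]
    · rw [part_init _ (le_refl n), part_of_le _ (le_refl n)]
      have : ∑ i, ν i = ∑ i : Fin n, Fin.init ν i + ν (Fin.last n) := by
        rw [Fin.sum_univ_castSucc]; rfl
      omega
  split
  · next hcond =>
    obtain ⟨htw, hsw⟩ := hcond
    apply Finset.card_nbij' (i := fun ν => Fin.init ν) (j := fun g => Fin.snoc g t)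
    · intro ν hν
      simp only [Finset.mem_coe, Finset.mem_filter, Finset.mem_filter, Finset.Nat.mem_antidiagonalTuple] at *
      obtain ⟨⟨hsum, hle, hbal⟩, hlast⟩ := hν
      refine ⟨?_, ?_, ?_⟩
      · have := Fin.sum_univ_castSucc ν
        simp only [Fin.init]
        omega
      · intro i
        have := hle i.castSucc
        simpa [Fin.init] using this
      · intro j hj
        have hb := hbal j (by omega)
        rw [part_init w (by omega), part_init ν (by omega), part_init ν (by omega)] at hb
        exact hb
    · intro g hg
      simp only [Finset.mem_coe, Finset.mem_filter, Finset.Nat.mem_antidiagonalTuple] at *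
      obtain ⟨hsum, hle, hbal⟩ := hg
      have hinit : Fin.init (Fin.snoc g t : Fin (n + 1) → ℕ) = g := by simp
      have hsnocsum : ∑ i, Fin.snoc g t i = k := by
        rw [Fin.sum_univ_castSucc]
        simp only [Fin.snoc_castSucc, Fin.snoc_last]
        have hts : t ≤ k := ht
        omega
      refine ⟨⟨hsnocsum, ?_, ?_⟩, by simp⟩
      · intro i
        refine Fin.lastCases ?_ (fun i => ?_) i
        · simpa using htw
        · simp only [Fin.snoc_castSucc]
          have := hle i
          simpa [Fin.init] using this
      · intro j hj
        rcases Nat.lt_or_ge j n with hjn | hjn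
        · have hb := hbal j hjn
          rw [part_init w (by omega), part_init (Fin.snoc g t) (by omega),
            part_init (Fin.snoc g t) (by omega), hinit]
          exact hb
        · have hjn' : j = n := by omega
          subst hjn'
          obtain ⟨h1, h2⟩ := hfact (Fin.snoc g t) hsnocsum (by simp)
          rw [part_of_le w (by omega), h1, h2]
          omega
    · intro ν hν
      simp only [Finset.mem_coe, Finset.mem_filter] at hν
      rw [← hν.2]
      exact Fin.snoc_init_self ν
    · intro g _
      simp
  · next hcond =>
    rw [Finset.card_eq_zero, Finset.filter_eq_empty_iff]
    intro ν hν hlast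
    simp only [Finset.mem_coe, Finset.mem_filter, Finset.Nat.mem_antidiagonalTuple] at hν
    obtain ⟨hsum, hle, hbal⟩ := hν
    apply hcond
    constructor
    · rw [← hlast]; exact hle _
    · have hb := hbal n (by omega)
      obtain ⟨h1, h2⟩ := hfact ν hsum hlast
      rw [part_of_le w (by omega), h1, h2] at hb
      omega


lemma pi_neg {n : ℕ} (w : Fin n → ℕ) {j : ℤ} (h : j < 0) : piCount n w j = 0 := by
  simp [piCount, h]

lemma pi_nonneg {n : ℕ} (w : Fin n → ℕ) (j : ℤ) : 0 ≤ piCount n w j := by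
  unfold piCount; split <;> positivity

lemma pi_eq_of_nonneg {n : ℕ} (w : Fin n → ℕ) {j : ℤ} (h : 0 ≤ j) :
    piCount n w j =
      (((Finset.Nat.antidiagonalTuple n j.toNat).filter (fun ν => ∀ i, ν i ≤ w i)).card : ℤ) := by
  simp [piCount, not_lt.mpr h]

lemma pi_vanish {n : ℕ} (w : Fin n → ℕ) {j : ℤ} (h : (∑ i, w i : ℤ) < j) :
    piCount n w j = 0 := by
  have hj : (0:ℤ) ≤ j := le_trans (by positivity) (le_of_lt h)
  rw [pi_eq_of_nonneg w hj]
  have hc : ∑ i, ((w i : ℕ) : ℤ) = ((∑ i, w i : ℕ) : ℤ) := by push_cast; rfl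
  rw [hc] at h
  rw [Nat.cast_eq_zero, Finset.card_eq_zero, Finset.filter_eq_empty_iff]
  intro ν hν
  rw [Finset.Nat.mem_antidiagonalTuple] at hν
  intro hle
  have h1 : ∑ i, ν i ≤ ∑ i, w i := Finset.sum_le_sum fun i _ => hle i
  omega


lemma pi_symm {n : ℕ} (w : Fin n → ℕ) (j : ℤ) :
    piCount n w j = piCount n w ((∑ i, w i : ℕ) - j) := by
  rcases lt_or_ge j 0 with hj | hj
  · rw [pi_neg w hj, pi_vanish w (by push_cast; omega)]
  rcases lt_or_ge ((∑ i, w i : ℕ) : ℤ) j with hj2 | hj2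
  · rw [pi_vanish w (by push_cast at hj2 ⊢; omega), pi_neg w (by omega)]
  rw [pi_eq_of_nonneg w hj, pi_eq_of_nonneg w (by omega)]
  congr 1
  have htn : ((∑ i, w i : ℕ) - j).toNat = ∑ i, w i - j.toNat := by omega
  apply Finset.card_nbij' (i := fun ν i => w i - ν i) (j := fun ν i => w i - ν i)
  · intro ν hν
    simp only [Finset.mem_coe, Finset.mem_filter, Finset.Nat.mem_antidiagonalTuple] at *
    obtain ⟨hsum, hle⟩ := hν
    have h1 : ∑ i, ν i ≤ ∑ i, w i := Finset.sum_le_sum fun i _ => hle i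
    refine ⟨?_, fun i => Nat.sub_le _ _⟩
    rw [Finset.sum_tsub_distrib _ (fun i _ => hle i), hsum, htn]
  · intro ν hν
    simp only [Finset.mem_coe, Finset.mem_filter, Finset.Nat.mem_antidiagonalTuple] at *
    obtain ⟨hsum, hle⟩ := hν
    have h1 : ∑ i, ν i ≤ ∑ i, w i := Finset.sum_le_sum fun i _ => hle i
    refine ⟨?_, fun i => Nat.sub_le _ _⟩
    rw [Finset.sum_tsub_distrib _ (fun i _ => hle i), hsum, htn]
    omega
  · intro ν hν
    simp only [Finset.mem_coe, Finset.mem_filter, Finset.Nat.mem_antidiagonalTuple] at hν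
    funext i
    have := hν.2 i
    simp only []
    omega
  · intro ν hν
    simp only [Finset.mem_coe, Finset.mem_filter, Finset.Nat.mem_antidiagonalTuple] at hν
    funext i
    have := hν.2 i
    simp only []
    omega


lemma pi_rec {n : ℕ} (w : Fin (n + 1) → ℕ) (j : ℤ) :
    piCount (n + 1) w j
      = ∑ t ∈ Finset.range (w (Fin.last n) + 1), piCount n (Fin.init w) (j - t) := by
  rcases lt_or_ge j 0 with hj | hj
  · rw [pi_neg w hj]
    exact (Finset.sum_eq_zero fun t _ => (pi_neg _ (by omega))).symm
  rw [pi_eq_of_nonneg w hj]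
  rw [Finset.card_eq_sum_card_fiberwise (f := fun ν => ν (Fin.last n))
    (t := Finset.range (w (Fin.last n) + 1)) ?hmem]
  case hmem =>
    intro ν hν
    simp only [Finset.mem_coe, Finset.mem_filter] at hν
    exact Finset.mem_range.mpr (Nat.lt_succ_of_le (hν.2 (Fin.last n)))
  push_cast
  apply Finset.sum_congr rfl
  intro t ht
  rw [Finset.mem_range] at ht
  rcases le_or_gt (t : ℤ) j with htj | htj
  · -- fiber ↔ piCount n (init w) (j - t)
    rw [pi_eq_of_nonneg _ (by omega)]
    congr 1
    have htoNat : (j - t).toNat = j.toNat - t := by omega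
    apply Finset.card_nbij' (i := fun ν => Fin.init ν) (j := fun g => Fin.snoc g t)
    · intro ν hν
      simp only [Finset.mem_coe, Finset.mem_filter, Finset.Nat.mem_antidiagonalTuple] at *
      obtain ⟨⟨hsum, hle⟩, hlast⟩ := hν
      rw [Fin.sum_univ_castSucc] at hsum
      constructor
      · rw [htoNat]
        simp only [Fin.init]
        omega
      · intro i
        exact hle i.castSucc
    · intro g hg
      simp only [Finset.mem_coe, Finset.mem_filter, Finset.Nat.mem_antidiagonalTuple] at *
      obtain ⟨hsum, hle⟩ := hg
      rw [htoNat] at hsum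
      refine ⟨⟨?_, ?_⟩, ?_⟩
      · rw [Fin.sum_univ_castSucc]
        simp only [Fin.snoc_castSucc, Fin.snoc_last]
        omega
      · intro i
        refine Fin.lastCases ?_ (fun i => ?_) i
        · simpa using Nat.lt_succ_iff.mp ht
        · simp only [Fin.snoc_castSucc]
          exact hle i
      · simp
    · intro ν hν
      simp only [Finset.mem_coe, Finset.mem_filter] at hν
      rw [← hν.2]
      exact Fin.snoc_init_self ν
    · intro g _
      simp
  · -- empty fiber
    rw [pi_neg _ (by omega)]
    rw [Nat.cast_eq_zero, Finset.card_eq_zero, Finset.filter_eq_empty_iff]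
    intro ν hν
    simp only [Finset.mem_coe, Finset.mem_filter, Finset.Nat.mem_antidiagonalTuple] at hν
    intro hlast
    have : ν (Fin.last n) ≤ ∑ i, ν i := Finset.single_le_sum (fun i _ => Nat.zero_le _) (Finset.mem_univ _)
    omega


lemma pi_zero_zero (w : Fin 0 → ℕ) : piCount 0 w 0 = 1 := by
  rw [pi_eq_of_nonneg w le_rfl]
  norm_num

lemma keyB (n : ℕ) (w : Fin n → ℕ) (k : ℕ) (h : ∑ i, w i ≤ 2 * k) :
    ((balSet n w k).card : ℤ)
      = piCount n w (((∑ i, w i : ℕ) : ℤ) - k)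
        - piCount n w (((∑ i, w i : ℕ) : ℤ) - k - 1) := by
  induction n generalizing k with
  | zero =>
    have hs : (∑ i, w i) = 0 := by simp
    rw [bal_zero, hs]
    rcases Nat.eq_zero_or_pos k with hk | hk
    · subst hk
      have e1 : (((0:ℕ) : ℤ)) - (((0:ℕ)) : ℤ) = 0 := by norm_num
      rw [if_pos rfl, e1, pi_zero_zero, pi_neg w (by norm_num)]
      norm_num
    · rw [if_neg (by omega), pi_neg w (by push_cast; omega), pi_neg w (by push_cast; omega)]
      norm_num
  | succ n ih =>
    rw [bal_rec, Nat.cast_sum]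
    set a := w (Fin.last n) with ha
    set w' := Fin.init w with hw'
    have hWsplit : ∑ i, w i = ∑ i, w' i + a := by
      rw [Fin.sum_univ_castSucc]; rfl
    set W' := ∑ i, w' i with hW'
    set T := min a (2 * k - (W' + a)) with hT
    have hTk : T ≤ k := by omega
    set f : ℕ → ℤ := fun t => piCount n w' ((W' : ℤ) - k - 1 + t) with hf
    have hstep : ∀ t ∈ Finset.range (k + 1),
        ((if t ≤ a ∧ ∑ i, w i + t ≤ 2 * k
          then (balSet n w' (k - t)).card else 0 : ℕ) : ℤ)
        = (if t ≤ T then f (t + 1) - f t else 0) := by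
      intro t htr
      rw [Finset.mem_range, Nat.lt_succ_iff] at htr
      by_cases hc : t ≤ a ∧ ∑ i, w i + t ≤ 2 * k
      · rw [if_pos hc, if_pos (by omega)]
        have hinner : ∑ i, w' i ≤ 2 * (k - t) := by omega
        rw [ih w' (k - t) hinner, hf]
        simp only []
        have e1 : ((W' : ℕ) : ℤ) - ((k - t : ℕ) : ℤ) = (W' : ℤ) - k - 1 + ((t : ℕ) + 1 : ℕ) := by
          push_cast [Nat.cast_sub (show t ≤ k from htr)]
          ring
        have e2 : ((W' : ℕ) : ℤ) - ((k - t : ℕ) : ℤ) - 1 = (W' : ℤ) - k - 1 + (t : ℕ) := by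
          push_cast [Nat.cast_sub (show t ≤ k from htr)]
          ring
        rw [e2, e1]
      · rw [if_neg hc, if_neg (by omega)]
        norm_num
    rw [Finset.sum_congr rfl hstep]
    rw [← Finset.sum_filter]
    have hfilter : (Finset.range (k + 1)).filter (fun t => t ≤ T) = Finset.range (T + 1) := by
      ext t
      simp only [Finset.mem_filter, Finset.mem_range]
      omega
    rw [hfilter, Finset.sum_range_sub f (T + 1)]
    have hcast : ∀ j : ℤ, piCount (n + 1) w j
        = ∑ t ∈ Finset.range (a + 1), piCount n w' (j - t) := fun j => pi_rec w j
    rw [hcast, hcast]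
    rw [← Finset.sum_sub_distrib]
    have hrhs : ∀ t ∈ Finset.range (a + 1),
        piCount n w' ((((∑ i, w i : ℕ) : ℤ) - k) - t)
          - piCount n w' ((((∑ i, w i : ℕ) : ℤ) - k - 1) - t)
        = f (a + 1 - t) - f (a - t) := by
      intro t htr
      rw [Finset.mem_range, Nat.lt_succ_iff] at htr
      have e1 : (((∑ i, w i : ℕ) : ℤ) - k) - t = (W' : ℤ) - k - 1 + ((a + 1 - t : ℕ) : ℤ) := by
        rw [hWsplit]
        push_cast [Nat.cast_sub (by omega : t ≤ a + 1)]
        ring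
      have e2 : (((∑ i, w i : ℕ) : ℤ) - k - 1) - t = (W' : ℤ) - k - 1 + ((a - t : ℕ) : ℤ) := by
        rw [hWsplit]
        push_cast [Nat.cast_sub htr]
        ring
      rw [e1, e2]
    set g : ℕ → ℤ := fun t => f (t + 1) - f t with hg
    have hconv : ∀ x ∈ Finset.range (a + 1), f (a + 1 - x) - f (a - x) = g (a + 1 - 1 - x) := by
      intro x hx
      rw [Finset.mem_range] at hx
      rw [hg]
      simp only []
      have e : a + 1 - x = (a + 1 - 1 - x) + 1 := by omega
      have e' : a - x = a + 1 - 1 - x := by omega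
      rw [e, e']
    rw [Finset.sum_congr rfl hrhs, Finset.sum_congr rfl hconv, Finset.sum_range_reflect g (a + 1)]
    have hsg : ∑ j ∈ Finset.range (a + 1), g j = f (a + 1) - f 0 := by
      rw [hg]
      exact Finset.sum_range_sub f (a + 1)
    rw [hsg]
    have hgoal : f (T + 1) = f (a + 1) := by
      rcases le_or_gt a (2 * k - (W' + a)) with hca | hca
      · have : T = a := by omega
        rw [this]
      · have hTval : T = 2 * k - (W' + a) := by omega
        have hWa : W' + a ≤ 2 * k := by omega
        have e3 : (W' : ℤ) - k - 1 + ((T : ℕ) + 1 : ℕ) = (k : ℤ) - a := by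
          rw [hTval]
          push_cast [Nat.cast_sub hWa]
          ring
        have e4 : (W' : ℤ) - k - 1 + ((a : ℕ) + 1 : ℕ) = ((W' : ℕ) : ℤ) - ((k : ℤ) - a) := by
          push_cast
          ring
        rw [hf]
        simp only []
        rw [e3, e4, ← pi_symm]
    rw [hgoal]


lemma mem_balSet_of {n k : ℕ} {w : Fin n → ℕ}
    (τ : (Fin k → Fin n) × (Fin k → Fin n)) (hs : IsSSYT τ) (hc : content τ = w) :
    cnt τ.1 ∈ balSet n w k := by
  obtain ⟨hm1, hm2, hcol⟩ := hs
  have hmono1 : Monotone τ.1 := fun a b hab => hm1 a b hab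
  have hmono2 : Monotone τ.2 := fun a b hab => hm2 a b hab
  have hw : ∀ i, cnt τ.1 i + cnt τ.2 i = w i := fun i => by rw [← hc]; rfl
  have hsum1 : ∑ i, cnt τ.1 i = k := sum_cnt _
  have hcolp := (col_iff hmono1 hmono2).mp hcol
  rw [balSet, Finset.mem_filter, Finset.Nat.mem_antidiagonalTuple]
  refine ⟨hsum1, fun i => by have := hw i; omega, ?_⟩
  intro j hj
  have hw' : w = fun i => cnt τ.1 i + cnt τ.2 i := funext fun i => (hw i).symm
  have hpw : part w (j + 1) = part (cnt τ.1) (j + 1) + part (cnt τ.2) (j + 1) := by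
    rw [hw', part_add]
  have := hcolp j
  omega

lemma exists_tab {n k : ℕ} {w : Fin n → ℕ} (hk : ∑ i, w i = 2 * k) {ν : Fin n → ℕ}
    (hν : ν ∈ balSet n w k) :
    ∃ τ : (Fin k → Fin n) × (Fin k → Fin n), (IsSSYT τ ∧ content τ = w) ∧ cnt τ.1 = ν := by
  rw [balSet, Finset.mem_filter, Finset.Nat.mem_antidiagonalTuple] at hν
  obtain ⟨hsum, hle, hbal⟩ := hν
  set μ : Fin n → ℕ := fun i => w i - ν i with hμ
  have hwd : w = fun i => ν i + μ i := funext fun i => by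
    have := hle i
    simp only [hμ]
    omega
  have hsumμ : ∑ i, μ i = k := by
    have h2 : ∑ i, w i = ∑ i, ν i + ∑ i, μ i := by
      rw [hwd, Finset.sum_add_distrib]
    omega
  obtain ⟨r1, hr1m, hr1c⟩ := exists_mono ν hsum
  obtain ⟨r2, hr2m, hr2c⟩ := exists_mono μ hsumμ
  have hballall : ∀ j : ℕ, part μ (j + 1) ≤ part ν j := by
    intro j
    rcases Nat.lt_or_ge j n with hj | hj
    · have hb := hbal j hj
      have hpw : part w (j + 1) = part ν (j + 1) + part μ (j + 1) := by rw [hwd, part_add]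
      omega
    · have h1 : part μ (j + 1) = k := by rw [part_of_le _ (by omega), hsumμ]
      have h2 : part ν j = k := by rw [part_of_le _ (by omega), hsum]
      omega
  have hcol : ∀ t, r1 t < r2 t := by
    apply (col_iff hr1m hr2m).mpr
    intro j
    rw [hr1c, hr2c]
    exact hballall j
  refine ⟨(r1, r2), ⟨⟨fun s t h => hr1m h, fun s t h => hr2m h, hcol⟩, ?_⟩, hr1c⟩
  funext i
  show cnt r1 i + cnt r2 i = w i
  rw [hr1c, hr2c]
  have := hle i
  simp only [hμ]
  omega

lemma stepA {n : ℕ} (w : Fin n → ℕ) (k : ℕ) (hk : ∑ i, w i = 2 * k) :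
    Nat.card {τ : (Fin k → Fin n) × (Fin k → Fin n) // IsSSYT τ ∧ content τ = w}
      = (balSet n w k).card := by
  rw [← Nat.card_eq_finsetCard]
  apply Nat.card_eq_of_bijective
    (fun τp => (⟨cnt τp.1.1, mem_balSet_of τp.1 τp.2.1 τp.2.2⟩ : {ν // ν ∈ balSet n w k}))
  constructor
  · rintro ⟨τ, hτ⟩ ⟨τ', hτ'⟩ he
    simp only [Subtype.mk.injEq] at he
    obtain ⟨⟨h1, h2, h3⟩, hc⟩ := hτ
    obtain ⟨⟨h1', h2', h3'⟩, hc'⟩ := hτ'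
    have hm1 : Monotone τ.1 := fun a b hab => h1 a b hab
    have hm2 : Monotone τ.2 := fun a b hab => h2 a b hab
    have hm1' : Monotone τ'.1 := fun a b hab => h1' a b hab
    have hm2' : Monotone τ'.2 := fun a b hab => h2' a b hab
    have hcnt2 : cnt τ.2 = cnt τ'.2 := by
      funext i
      have e1 : cnt τ.1 i + cnt τ.2 i = w i := by rw [← hc]; rfl
      have e2 : cnt τ'.1 i + cnt τ'.2 i = w i := by rw [← hc']; rfl
      have e3 : cnt τ.1 i = cnt τ'.1 i := congrFun he i
      omega
    have q1 := mono_cnt_inj hm1 hm1' he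
    have q2 := mono_cnt_inj hm2 hm2' hcnt2
    exact Subtype.ext (Prod.ext q1 q2)
  · rintro ⟨ν, hν⟩
    obtain ⟨τ, hτ, hcnt⟩ := exists_tab hk hν
    exact ⟨⟨τ, hτ⟩, Subtype.ext hcnt⟩

end Stmt5Aux

open Stmt5Aux in
/-- For w ∈ ℕⁿ with |w| even, the number of semistandard Young tableaux of shape
(|w|/2, |w|/2) and content w equals π(n, w, |w|/2) − π(n, w, |w|/2 − 1). -/
theorem stmt5 (n : ℕ) (w : Fin n → ℕ) (hw : Even (∑ i, w i)) :
    (Nat.card {τ : (Fin ((∑ i, w i) / 2) → Fin n) × (Fin ((∑ i, w i) / 2) → Fin n) //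
        IsSSYT τ ∧ content τ = w} : ℤ)
      = piCount n w (((∑ i, w i) / 2 : ℕ) : ℤ)
          - piCount n w ((((∑ i, w i) / 2 : ℕ) : ℤ) - 1) := by
  obtain ⟨k, hk⟩ := hw
  have hk2 : ∑ i, w i = 2 * k := by omega
  have hdiv : (∑ i, w i) / 2 = k := by omega
  rw [hdiv]
  rw [stepA w k hk2, keyB n w k (by omega)]
  have e2 : ((∑ i, w i : ℕ) : ℤ) - (k : ℕ) - 1 = ((k : ℕ) : ℤ) - 1 := by
    rw [hk2]; push_cast; ring
  have e1 : ((∑ i, w i : ℕ) : ℤ) - (k : ℕ) = ((k : ℕ) : ℤ) := by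
    rw [hk2]; push_cast; ring
  rw [e2, e1]
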